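/- Let $c_1, c_2, c_3 > 0$ with $c_3 \geq 2\sqrt{c_1 c_2}$, and let $\mu > 1$, $a_1 = 1+1/\mu$, $a_2 = 1-1/\mu$. Let $a \leq b$ be the real roots of $c_1 z^2 - c_3 z + c_2 = 0$, and fix $k > 1$ and $\bar V = (kb)^\mu$. Then for all $V_0 \geq \bar V$, $\int_{\bar V}^{V_0} \frac{dV}{c_1 V^{a_1} + c_2 V^{a_2} - c_3 V} \leq \frac{\mu}{c_1 (b - a)} \log\left(\frac{kb - a}{kb - b}\right)$ when $a < b$. -/

import Mathlib

open Real
set_option maxHeartbeats 1000000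

theorem stmt10 (c1 c2 c3 μ k : ℝ) (hc1 : 0 < c1) (hc2 : 0 < c2)
    (hc3 : 2 * Real.sqrt (c1 * c2) < c3) (hμ : 1 < μ) (hk : 1 < k) :
    let a := (c3 - Real.sqrt (c3^2 - 4*c1*c2)) / (2*c1)
    let b := (c3 + Real.sqrt (c3^2 - 4*c1*c2)) / (2*c1)
    let Vbar := (k * b) ^ μ
    ∀ V0, Vbar ≤ V0 →
      (∫ V in Vbar..V0, 1 / (c1 * V ^ (1 + 1/μ) + c2 * V ^ (1 - 1/μ) - c3 * V)) ≤
        μ / (c1 * (b - a)) * Real.log ((k*b - a) / (k*b - b)) := by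
  intro a b Vbar V0 hV0
  have hμ0 : (0:ℝ) < μ := by linarith
  have hc3pos : 0 < c3 := lt_of_le_of_lt (by positivity) hc3
  have hdisc : 0 < c3^2 - 4*c1*c2 := by
    have h := Real.sq_sqrt (mul_nonneg hc1.le hc2.le)
    nlinarith [Real.sqrt_nonneg (c1*c2)]
  set d := Real.sqrt (c3^2 - 4*c1*c2) with hd
  have hd2 : d^2 = c3^2 - 4*c1*c2 := Real.sq_sqrt hdisc.le
  have hdpos : 0 < d := Real.sqrt_pos.mpr hdisc
  have hdc3 : d < c3 := by nlinarith
  have hadef : a = (c3 - d) / (2*c1) := rfl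
  have hbdef : b = (c3 + d) / (2*c1) := rfl
  clear_value a b d
  have ha : 0 < a := by
    rw [hadef]; apply div_pos (by linarith) (by linarith)
  have hba : a < b := by
    rw [hadef, hbdef]
    apply div_lt_div_of_pos_right (by linarith) (by linarith)
  have hb : 0 < b := ha.trans hba
  have hkb : b < k*b := by nlinarith
  have hkba : a < k*b := hba.trans hkb
  have hVbar : (0:ℝ) < Vbar := Real.rpow_pos_of_pos (by positivity) μ
  have hVbarz : Vbar ^ (1/μ) = k*b := by
    show ((k*b) ^ μ) ^ (1/μ) = k*b
    rw [← Real.rpow_mul (by positivity), mul_one_div, div_self hμ0.ne', Real.rpow_one]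
  have hsum : c1 * (a + b) = c3 := by
    rw [hadef, hbdef]; field_simp; ring
  have hprod : c1 * (a * b) = c2 := by
    rw [hadef, hbdef]; field_simp; nlinarith [hd2]
  set C := μ / (c1 * (b - a)) with hC
  have hCpos : 0 < C := div_pos hμ0 (mul_pos hc1 (by linarith))
  -- key facts for V in the interval
  have hzmono : ∀ V, Vbar ≤ V → k*b ≤ V ^ (1/μ) := by
    intro V hV
    calc k*b = Vbar ^ (1/μ) := hVbarz.symm
    _ ≤ V ^ (1/μ) := Real.rpow_le_rpow hVbar.le hV (by positivity)
  have key : ∀ V ∈ Set.Icc Vbar V0,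
      HasDerivAt (fun V => C * (Real.log (V ^ (1/μ) - b) - Real.log (V ^ (1/μ) - a)))
        (1 / (c1 * V ^ (1 + 1/μ) + c2 * V ^ (1 - 1/μ) - c3 * V)) V := by
    intro V hV
    have hVpos : 0 < V := lt_of_lt_of_le hVbar hV.1
    have hz : k*b ≤ V ^ (1/μ) := hzmono V hV.1
    have hzb : b < V ^ (1/μ) := lt_of_lt_of_le hkb hz
    have hza : a < V ^ (1/μ) := lt_trans hba hzb
    have h1 : HasDerivAt (fun V : ℝ => V ^ (1/μ)) (1/μ * V ^ (1/μ - 1)) V :=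
      Real.hasDerivAt_rpow_const (Or.inl hVpos.ne')
    have hlb : HasDerivAt (fun V : ℝ => Real.log (V ^ (1/μ) - b))
        ((1/μ * V ^ (1/μ - 1)) / (V ^ (1/μ) - b)) V :=
      (h1.sub_const b).log (by linarith)
    have hla : HasDerivAt (fun V : ℝ => Real.log (V ^ (1/μ) - a))
        ((1/μ * V ^ (1/μ - 1)) / (V ^ (1/μ) - a)) V :=
      (h1.sub_const a).log (by linarith)
    have hG := ((hlb.sub hla).const_mul C)
    convert hG using 1
    case e'_4 => rfl
    case e'_5 => rfl
    case e'_8 => rfl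
    -- algebra: show the integrand equals the derivative expression
    set z := V ^ (1/μ) with hzdef
    have e1 : V ^ (1 - 1/μ) * (z * z) = V ^ (1 + 1/μ) := by
      rw [hzdef, ← Real.rpow_add hVpos, ← Real.rpow_add hVpos]; ring_nf
    have e2 : V ^ (1 - 1/μ) * z = V := by
      rw [hzdef, ← Real.rpow_add hVpos]; norm_num
    have e3 : V ^ (1/μ - 1) * V ^ (1 - 1/μ) = 1 := by
      rw [← Real.rpow_add hVpos]; norm_num
    have hDeq : c1 * V ^ (1 + 1/μ) + c2 * V ^ (1 - 1/μ) - c3 * V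
        = V ^ (1 - 1/μ) * (c1 * (z - a) * (z - b)) := by
      have expand : c1 * (z - a) * (z - b) = c1 * (z * z) - (c1*(a+b)) * z + c1*(a*b) := by ring
      rw [expand, hsum, hprod]
      linear_combination (-c1) * e1 + c3 * e2
    rw [hDeq, hC]
    have hV1 : (0:ℝ) < V ^ (1 - 1/μ) := Real.rpow_pos_of_pos hVpos _
    have hzb' : z - b ≠ 0 := sub_ne_zero_of_ne hzb.ne'
    have hza' : z - a ≠ 0 := sub_ne_zero_of_ne hza.ne'
    have hba' : b - a ≠ 0 := sub_ne_zero_of_ne hba.ne'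
    have emain : V ^ (1/μ - 1) = (V ^ (1 - 1/μ))⁻¹ := eq_inv_of_mul_eq_one_left e3
    have step : C * (1/μ * V ^ (1/μ - 1) / (z - b) - 1/μ * V ^ (1/μ - 1) / (z - a))
        = V ^ (1/μ - 1) / (c1 * ((z - a) * (z - b))) := by
      rw [hC]; field_simp; ring
    rw [step, emain]
    rw [div_eq_div_iff (by positivity) (by positivity)]
    field_simp
  have hcont : ContinuousOn
      (fun V => 1 / (c1 * V ^ (1 + 1/μ) + c2 * V ^ (1 - 1/μ) - c3 * V)) (Set.uIcc Vbar V0) := by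
    rw [Set.uIcc_of_le hV0]
    apply ContinuousOn.div continuousOn_const
    · apply ContinuousOn.sub
      apply ContinuousOn.add
      · exact continuousOn_const.mul (continuousOn_id.rpow_const
          (fun x hx => Or.inl (ne_of_gt (lt_of_lt_of_le hVbar hx.1))))
      · exact continuousOn_const.mul (continuousOn_id.rpow_const
          (fun x hx => Or.inl (ne_of_gt (lt_of_lt_of_le hVbar hx.1))))
      · exact continuousOn_const.mul continuousOn_id
    · intro V hV
      have hVpos : 0 < V := lt_of_lt_of_le hVbar hV.1
      have hz : k*b ≤ V ^ (1/μ) := hzmono V hV.1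
      have hzb : b < V ^ (1/μ) := lt_of_lt_of_le hkb hz
      have hza : a < V ^ (1/μ) := lt_trans hba hzb
      have e1 : V ^ (1 - 1/μ) * (V ^ (1/μ) * V ^ (1/μ)) = V ^ (1 + 1/μ) := by
        rw [← Real.rpow_add hVpos, ← Real.rpow_add hVpos]; ring_nf
      have e2 : V ^ (1 - 1/μ) * V ^ (1/μ) = V := by
        rw [← Real.rpow_add hVpos]; norm_num
      have hDeq : c1 * V ^ (1 + 1/μ) + c2 * V ^ (1 - 1/μ) - c3 * V
          = V ^ (1 - 1/μ) * (c1 * (V ^ (1/μ) - a) * (V ^ (1/μ) - b)) := by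
        have expand : c1 * (V ^ (1/μ) - a) * (V ^ (1/μ) - b)
            = c1 * (V ^ (1/μ) * V ^ (1/μ)) - (c1*(a+b)) * V ^ (1/μ) + c1*(a*b) := by ring
        rw [expand, hsum, hprod]
        linear_combination (-c1) * e1 + c3 * e2
      rw [hDeq]
      have hV1 : 0 < V ^ (1 - 1/μ) := Real.rpow_pos_of_pos hVpos _
      exact ne_of_gt (mul_pos hV1 (mul_pos (mul_pos hc1 (by linarith)) (by linarith)))
  have hIcc : Set.uIcc Vbar V0 = Set.Icc Vbar V0 := Set.uIcc_of_le hV0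
  have hint := intervalIntegral.integral_eq_sub_of_hasDerivAt
    (f := fun V => C * (Real.log (V ^ (1/μ) - b) - Real.log (V ^ (1/μ) - a)))
    (by rw [hIcc]; exact key) (hcont.intervalIntegrable)
  rw [hint]
  -- final inequality
  have hz0 : k*b ≤ V0 ^ (1/μ) := hzmono V0 hV0
  have hlog0 : Real.log (V0 ^ (1/μ) - b) ≤ Real.log (V0 ^ (1/μ) - a) := by
    apply Real.log_le_log (by linarith) (by linarith)
  beta_reduce
  rw [hVbarz]
  have hrhs : Real.log ((k*b - a) / (k*b - b)) = Real.log (k*b - a) - Real.log (k*b - b) :=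
    Real.log_div (by linarith) (by linarith)
  rw [hrhs]
  have hfin : C * (Real.log (V0 ^ (1/μ) - b) - Real.log (V0 ^ (1/μ) - a)) ≤ 0 :=
    mul_nonpos_of_nonneg_of_nonpos hCpos.le (by linarith)
  linarith
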